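/- The equation x^2 = y^a + ε₁·y^b + ε₂, with ε₁, ε₂ ∈ {1, −1}, has no positive integer solutions (x, y, a, b) with a > b, a even, y > 2, and y not a perfect power of another integer (i.e., y is not of the form m^k for integers m ≥ 1 and k ≥ 2). -/
import Mathlib

/-- The Lucas-type sequence z 0 = 0, z 1 = 1, z (n+2) = l * z(n+1) - z n. -/
def zseq (l : ℤ) : ℕ → ℤ
  | 0 => 0
  | 1 => 1
  | n + 2 => l * zseq l (n + 1) - zseq l n

lemma zseq_zero (l : ℤ) : zseq l 0 = 0 := rfl
lemma zseq_one (l : ℤ) : zseq l 1 = 1 := rfl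
lemma zseq_step (l : ℤ) (n : ℕ) : zseq l (n + 2) = l * zseq l (n + 1) - zseq l n := rfl
lemma zseq_two (l : ℤ) : zseq l 2 = l := by
  have h := zseq_step l 0
  rw [zseq_one, zseq_zero] at h
  simpa using h

/-- Growth of zseq. -/
lemma zseq_grow (l : ℤ) (hl : 10 ≤ l) :
    ∀ n, 0 ≤ zseq l n ∧ zseq l n < zseq l (n + 1) ∧ (l - 1) ^ n ≤ zseq l (n + 1) := by
  intro n
  induction n with
  | zero =>
    refine ⟨le_refl _, ?_, ?_⟩ <;> simp [zseq_zero, zseq_one]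
  | succ n ih =>
    obtain ⟨h0, h1, h2⟩ := ih
    have hz1 : 1 ≤ zseq l (n + 1) := by
      have := Int.add_one_le_iff.mpr h1
      linarith
    have h0l : (0:ℤ) ≤ l - 1 := by linarith
    have hpow : (l - 1) ^ (n + 1) ≤ (l - 1) * zseq l (n + 1) := by
      rw [pow_succ]
      calc (l - 1) ^ n * (l - 1) = (l - 1) * (l - 1) ^ n := by ring
      _ ≤ (l - 1) * zseq l (n + 1) := mul_le_mul_of_nonneg_left h2 h0l
    have hprod : (0:ℤ) ≤ (l - 2) * zseq l (n + 1) :=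
      mul_nonneg (by linarith) (by linarith)
    refine ⟨by linarith, ?_, ?_⟩
    · rw [zseq_step]; linarith
    · rw [zseq_step]; linarith

lemma zseq_pos (l : ℤ) (hl : 10 ≤ l) {n : ℕ} (hn : 1 ≤ n) : 1 ≤ zseq l n := by
  obtain ⟨m, rfl⟩ := Nat.exists_eq_add_of_le hn
  have h := zseq_grow l hl m
  have h1 := Int.add_one_le_iff.mpr h.2.1
  have h2 : 1 + m = m + 1 := by omega
  rw [h2]
  linarith [h.1]

/-- Addition formula. -/
lemma zseq_add (l : ℤ) : ∀ m n : ℕ,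
    zseq l (m + n + 1) = zseq l (m + 1) * zseq l (n + 1) - zseq l m * zseq l n := by
  intro m
  induction m using Nat.twoStepInduction with
  | zero => intro n; simp [zseq_zero, zseq_one]
  | one =>
    intro n
    have h : 1 + n + 1 = n + 2 := by omega
    rw [h, zseq_step, zseq_two, zseq_one]
    ring
  | more m ih ih1 =>
    intro n
    have e1 : m + 2 + n + 1 = (m + n + 1) + 2 := by omega
    have e2 : m + 1 + n + 1 = (m + n + 1) + 1 := by omega
    have i1 := ih1 n
    rw [e2] at i1
    have i0 := ih n
    have e3 : m + 2 + 1 = m + 1 + 2 := by omega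
    rw [e1, zseq_step l (m + n + 1), i1, i0, e3, zseq_step l (m + 1), zseq_step l m]
    ring

/-- Doubling identity. -/
lemma zseq_double (l : ℤ) (m : ℕ) :
    zseq l (2 * (m + 1)) = zseq l (m + 1) * (zseq l (m + 2) - zseq l m) := by
  have h : 2 * (m + 1) = m + (m + 1) + 1 := by omega
  rw [h, zseq_add l m (m + 1)]
  ring

/-- Parity of zseq: z n has the same parity as n, when l is even. -/
lemma zseq_parity (l : ℤ) (hl : Even l) : ∀ n : ℕ, (Even (zseq l n) ↔ Even n) := by
  intro n
  induction n using Nat.twoStepInduction with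
  | zero => simp [zseq_zero]
  | one =>
    rw [zseq_one]
    norm_num
  | more n ih ih1 =>
    rw [zseq_step, Int.even_sub]
    have h1 : Even (l * zseq l (n + 1)) := hl.mul_right _
    have h2 : Even (n + 2) ↔ Even n := by
      rw [Nat.even_iff, Nat.even_iff]; omega
    rw [h2, ← ih]
    tauto

/-- z(n+2) - z n = 2 * odd, when 4 ∣ l - 2. -/
lemma zseq_gap (l : ℤ) (hl : Even l) (hl2 : (4:ℤ) ∣ l - 2) (n : ℕ) :
    ∃ w : ℤ, Odd w ∧ zseq l (n + 2) - zseq l n = 2 * w := by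
  obtain ⟨s, hs⟩ := hl2
  have hls : l = 4 * s + 2 := by linarith
  have hgap : zseq l (n + 2) - zseq l n = l * zseq l (n + 1) - 2 * zseq l n := by
    rw [zseq_step]; ring
  rcases Nat.even_or_odd n with hn | hn
  · -- n even: z n even, z (n+1) odd
    obtain ⟨p, hp⟩ := (zseq_parity l hl n).mpr hn
    have hodd : Odd (zseq l (n + 1)) := by
      rcases Int.even_or_odd (zseq l (n + 1)) with h | h
      · exfalso
        have h' := (zseq_parity l hl (n + 1)).mp h
        rw [Nat.even_iff] at h'
        rw [Nat.even_iff] at hn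
        omega
      · exact h
    obtain ⟨q, hq⟩ := hodd
    refine ⟨(2 * s + 1) * (2 * q + 1) - 2 * p, ⟨(2*s+1)*q + s - p, by ring⟩, ?_⟩
    rw [hgap, hp, hq, hls]
    ring
  · -- n odd: z n odd, z(n+1) even
    have hodd : Odd (zseq l n) := by
      rcases Int.even_or_odd (zseq l n) with h | h
      · exfalso
        have h' := (zseq_parity l hl n).mp h
        rw [Nat.even_iff] at h'
        rw [Nat.odd_iff] at hn
        omega
      · exact h
    obtain ⟨p, hp⟩ := hodd
    have heven : Even (zseq l (n + 1)) := by
      apply (zseq_parity l hl (n + 1)).mpr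
      rw [Nat.even_iff]
      rw [Nat.odd_iff] at hn
      omega
    obtain ⟨q, hq⟩ := heven
    refine ⟨(4 * s + 2) * q - 2 * p - 1, ⟨(2*s+1)*q - p - 1, by ring⟩, ?_⟩
    rw [hgap, hp, hq, hls]
    ring

/-- 2-adic structure: z (2^t * q) = 2^t * (odd) for odd q. -/
lemma zseq_two_adic (l : ℤ) (hl : Even l) (hl2 : (4:ℤ) ∣ l - 2) :
    ∀ t q : ℕ, Odd q → ∃ w : ℤ, Odd w ∧ zseq l (2 ^ t * q) = 2 ^ t * w := by
  intro t
  induction t with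
  | zero =>
    intro q hq
    refine ⟨zseq l q, ?_, by simp⟩
    rcases Int.even_or_odd (zseq l q) with h | h
    · exfalso
      have h' := (zseq_parity l hl q).mp h
      rw [Nat.even_iff] at h'
      rw [Nat.odd_iff] at hq
      omega
    · exact h
  | succ t ih =>
    intro q hq
    obtain ⟨w, hw, hzw⟩ := ih q hq
    have hMpos : 0 < 2 ^ t * q := Nat.mul_pos (pow_pos (by norm_num) t) hq.pos
    obtain ⟨m, hm⟩ : ∃ m, 2 ^ t * q = m + 1 := ⟨2 ^ t * q - 1, by omega⟩
    obtain ⟨w', hw', hgap⟩ := zseq_gap l hl hl2 m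
    refine ⟨w * w', hw.mul hw', ?_⟩
    have h1 : 2 ^ (t + 1) * q = 2 * (m + 1) := by
      rw [← hm, pow_succ]; ring
    rw [h1, zseq_double, hgap, ← hm, hzw, pow_succ]
    ring

/-- Uniqueness of 2-adic valuation. -/
lemma two_adic_unique : ∀ a b r w : ℕ, Odd r → Odd w → 2 ^ a * r = 2 ^ b * w → a = b := by
  intro a
  induction a with
  | zero =>
    intro b r w hr hw h
    cases b with
    | zero => rfl
    | succ b =>
      exfalso
      simp only [pow_zero, one_mul] at h
      have heven : Even r := by
        rw [h, pow_succ]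
        exact ⟨2 ^ b * w, by ring⟩
      rw [Nat.even_iff] at heven
      rw [Nat.odd_iff] at hr
      omega
  | succ a ih =>
    intro b r w hr hw h
    cases b with
    | zero =>
      exfalso
      simp only [pow_zero, one_mul] at h
      have heven : Even w := by
        rw [← h, pow_succ]
        exact ⟨2 ^ a * r, by ring⟩
      rw [Nat.even_iff] at heven
      rw [Nat.odd_iff] at hw
      omega
    | succ b =>
      have h2 : 2 * (2 ^ a * r) = 2 * (2 ^ b * w) := by
        calc 2 * (2 ^ a * r) = 2 ^ (a + 1) * r := by rw [pow_succ]; ring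
        _ = 2 ^ (b + 1) * w := h
        _ = 2 * (2 ^ b * w) := by rw [pow_succ]; ring
      have h3 : 2 ^ a * r = 2 ^ b * w := by omega
      have := ih b r w hr hw h3
      omega

lemma lt_two_pow_pred : ∀ d : ℕ, 3 ≤ d → d < 2 ^ (d - 1) := by
  intro d hd
  obtain ⟨k, rfl⟩ := Nat.exists_eq_add_of_le hd
  induction k with
  | zero => norm_num
  | succ k ih =>
    have h1 : 3 + k - 1 = k + 2 := by omega
    have h2 : 3 + (k + 1) - 1 = k + 3 := by omega
    have h3 := ih (by omega)
    rw [h1] at h3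
    rw [h2, pow_succ]
    omega

set_option maxHeartbeats 1000000 in
/-- Markov equation, case -4: no positive solutions. Core with A + B ≤ n fuel. -/
lemma markov_neg_aux (L : ℕ) (hL : 10 ≤ L) :
    ∀ n A B : ℕ, A + B ≤ n → 1 ≤ A → 1 ≤ B → B ≤ A →
      A ^ 2 + B ^ 2 + 4 ≠ L * A * B := by
  intro n
  induction n with
  | zero => intro A B h hA hB _ _; omega
  | succ n ih =>
    intro A B hsum hA hB hBA heq
    rcases eq_or_lt_of_le hBA with hEq | hlt
    · -- A = B
      subst hEq
      nlinarith
    · -- B < A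
      have hLBA : A < L * B := by
        have h1 : A * A < A * (L * B) := by nlinarith
        exact lt_of_mul_lt_mul_left h1 (by omega)
      obtain ⟨A', hA'⟩ : ∃ A', L * B = A + A' := ⟨L * B - A, by omega⟩
      have h1 : A * (A + A') = A ^ 2 + B ^ 2 + 4 := by
        calc A * (A + A') = A * (L * B) := by rw [hA']
        _ = L * A * B := by ring
        _ = A ^ 2 + B ^ 2 + 4 := heq.symm
      have hAA' : A * A' = B ^ 2 + 4 := by linarith [h1]
      have hA'pos : 1 ≤ A' := by
        rcases Nat.eq_zero_or_pos A' with h | h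
        · exfalso; rw [h, mul_zero] at hAA'; nlinarith
        · exact h
      have hA'A : A' < A := by
        by_contra hcon
        push_neg at hcon
        have hcon' : A * A ≤ B * B + 4 := by
          calc A * A ≤ A * A' := Nat.mul_le_mul_left A hcon
          _ = B ^ 2 + 4 := hAA'
          _ = B * B + 4 := by ring
        have hBA1 : B + 1 ≤ A := hlt
        have h5 : (B + 1) * (B + 1) ≤ B * B + 4 :=
          le_trans (Nat.mul_le_mul hBA1 hBA1) hcon'
        have hB2 : 2 * B ≤ 3 := by nlinarith
        have hB1 : B = 1 := by omega
        subst hB1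
        have hA2 : A ≤ 2 := by nlinarith
        have hA2' : A = 2 := by omega
        subst hA2'
        norm_num at heq
        omega
      have h3 : (A + A') * A' = L * B * A' := by rw [hA']
      have heq' : B ^ 2 + A' ^ 2 + 4 = L * B * A' := by nlinarith [h3, hAA']
      rcases le_total A' B with h1' | h1'
      · exact ih B A' (by omega) hB hA'pos h1' heq'
      · exact ih A' B (by omega) hA'pos hB h1' (by linarith [heq'])

lemma markov_neg (L : ℕ) (hL : 10 ≤ L) (A B : ℕ) (hA : 1 ≤ A) (hB : 1 ≤ B) :
    A ^ 2 + B ^ 2 + 4 ≠ L * A * B := by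
  rcases le_total B A with h | h
  · exact markov_neg_aux L hL (A + B) A B le_rfl hA hB h
  · intro heq
    exact markov_neg_aux L hL (A + B) B A (by omega) hB hA h (by linarith)

set_option maxHeartbeats 1000000 in
/-- Markov equation, case +4: all solutions with B < A come from the zseq chain. -/
lemma markov_pos (L : ℕ) (hL : 10 ≤ L) :
    ∀ A : ℕ, ∀ B : ℕ, B < A → A ^ 2 + B ^ 2 = L * A * B + 4 →
      ∃ N : ℕ, 1 ≤ N ∧ (A : ℤ) = 2 * zseq (L : ℤ) N ∧ (B : ℤ) = 2 * zseq (L : ℤ) (N - 1) := by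
  intro A
  induction A using Nat.strong_induction_on with
  | _ A ih =>
    intro B hBA heq
    rcases Nat.lt_or_ge B 3 with hB3 | hB3
    · interval_cases B
      · -- B = 0 : A^2 = 4, A = 2
        have h4 : A * A = 4 := by nlinarith
        have hA3 : A ≤ 2 := by nlinarith
        have hA2' : 2 ≤ A := by nlinarith
        have hA2 : A = 2 := by omega
        refine ⟨1, le_rfl, ?_, ?_⟩
        · rw [hA2, zseq_one]; norm_num
        · rw [zseq_zero]; norm_num
      · -- B = 1 : impossible
        exfalso
        have hAL : L < A := by nlinarith
        obtain ⟨D, hD⟩ : ∃ D, A = L + D + 1 := ⟨A - L - 1, by omega⟩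
        subst hD
        nlinarith
      · -- B = 2 : A = 2 L
        have h1 : A * A = (2 * L) * A := by nlinarith
        have hA2L : A = 2 * L := Nat.eq_of_mul_eq_mul_right (by omega) h1
        refine ⟨2, by norm_num, ?_, ?_⟩
        · rw [zseq_two, hA2L]; push_cast; ring
        · rw [zseq_one]; norm_num
    · -- B ≥ 3
      have hApos : 1 ≤ A := by omega
      have hB9 : 9 ≤ B * B := by nlinarith
      have hLBA : A < L * B := by
        have h0 : A * (L * B) + 4 = A ^ 2 + B ^ 2 := by nlinarith
        have h1 : A * A < A * (L * B) := by nlinarith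
        exact lt_of_mul_lt_mul_left h1 (by omega)
      obtain ⟨A', hA'⟩ : ∃ A', L * B = A + A' := ⟨L * B - A, by omega⟩
      have h1 : A * (A + A') + 4 = A ^ 2 + B ^ 2 := by
        have : A * (A + A') = A * (L * B) := by rw [hA']
        nlinarith [this]
      have hAA' : A * A' + 4 = B ^ 2 := by nlinarith [h1]
      have hA'B : A' < B := by
        by_contra hcon
        push_neg at hcon
        have hmul : A * B ≤ A * A' := Nat.mul_le_mul_left A hcon
        have hABB : A * B < B * B := by nlinarith [hAA']
        have : A < B := lt_of_mul_lt_mul_right hABB (Nat.zero_le B)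
        omega
      have h3 : (A + A') * A' = L * B * A' := by rw [hA']
      have heq' : B ^ 2 + A' ^ 2 = L * B * A' + 4 := by nlinarith [h3, hAA']
      obtain ⟨N, hN1, hBz, hA'z⟩ := ih B hBA A' hA'B heq'
      refine ⟨N + 1, by omega, ?_, by simpa using hBz⟩
      obtain ⟨M, rfl⟩ := Nat.exists_eq_add_of_le hN1
      have hidx : 1 + M - 1 = M := by omega
      rw [hidx] at hA'z
      have hstep : zseq (L:ℤ) (1 + M + 1) = (L:ℤ) * zseq (L:ℤ) (M + 1) - zseq (L:ℤ) M := by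
        have h4 : 1 + M + 1 = M + 2 := by omega
        rw [h4, zseq_step]
      have hcast : (A : ℤ) = (L : ℤ) * (B : ℤ) - (A' : ℤ) := by
        have h5 : (L * B : ℕ) = (A + A' : ℕ) := hA'
        push_cast at h5
        linarith
      rw [hcast, hstep, hBz, hA'z]
      have h6 : (1:ℕ) + M = M + 1 := by omega
      rw [h6]
      ring

set_option maxHeartbeats 4000000 in
theorem no_sq_eq_y_pow_pm_y_pow_pm_one
    (x y a b : ℕ) (hx : 0 < x) (hy : 2 < y) (ha : 0 < a) (hb : 0 < b)
    (hab : a > b) (haeven : Even a)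
    (hpow : ¬∃ m k : ℕ, 1 ≤ m ∧ 2 ≤ k ∧ y = m ^ k)
    (ε₁ ε₂ : ℤ) (hε₁ : ε₁ = 1 ∨ ε₁ = -1) (hε₂ : ε₂ = 1 ∨ ε₂ = -1) :
    (x : ℤ) ^ 2 ≠ (y : ℤ) ^ a + ε₁ * (y : ℤ) ^ b + ε₂ := by
  intro heq
  obtain ⟨c, hc⟩ := haeven
  have hc1 : 1 ≤ c := by omega
  set X : ℤ := (x : ℤ) with hX
  set Y : ℤ := (y : ℤ) with hY
  have hY3 : 3 ≤ Y := by
    have h3y : 3 ≤ y := hy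
    rw [hY]; exact_mod_cast h3y
  have hX1 : 1 ≤ X := by
    have h1x : 1 ≤ x := hx
    rw [hX]; exact_mod_cast h1x
  have hY1 : (1:ℤ) ≤ Y := by linarith
  have hYpow3 : ∀ n : ℕ, 1 ≤ n → 3 ≤ Y ^ n := by
    intro n hn
    calc (3:ℤ) ≤ Y := hY3
    _ = Y ^ 1 := (pow_one Y).symm
    _ ≤ Y ^ n := pow_le_pow_right₀ hY1 hn
  have hYa : Y ^ a = (Y ^ c) ^ 2 := by rw [hc, pow_add, sq]
  have hε₁sq : ε₁ ^ 2 = 1 := by rcases hε₁ with h | h <;> rw [h] <;> norm_num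
  -- Step A: b > c
  have hbc : c < b := by
    by_contra hcon
    push_neg at hcon
    have hP3 : 3 ≤ Y ^ c := hYpow3 c hc1
    have hYb3 : 3 ≤ Y ^ b := hYpow3 b hb
    have hYbP : Y ^ b ≤ Y ^ c := pow_le_pow_right₀ hY1 hcon
    have heq2 : X ^ 2 = (Y ^ c) ^ 2 + ε₁ * Y ^ b + ε₂ := by rw [← hYa]; exact heq
    rcases lt_trichotomy X (Y ^ c) with hXP | hXP | hXP
    · have hXle : X ≤ Y ^ c - 1 := by
        have := Int.add_one_le_iff.mpr hXP
        linarith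
      have hm0 : (0:ℤ) ≤ (Y ^ c - 1 - X) * (Y ^ c - 1 + X) :=
        mul_nonneg (by linarith) (by linarith)
      have hsq : X ^ 2 + 2 * Y ^ c ≤ (Y ^ c) ^ 2 + 1 := by nlinarith only [hm0]
      rcases hε₁ with h1 | h1 <;> rcases hε₂ with h2 | h2 <;>
        rw [h1, h2] at heq2 <;> linarith only [hsq, heq2, hYbP, hYb3, hP3]
    · rw [hXP] at heq2
      rcases hε₁ with h1 | h1 <;> rcases hε₂ with h2 | h2 <;>
        rw [h1, h2] at heq2 <;> linarith only [heq2, hYb3]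
    · have hXge : Y ^ c + 1 ≤ X := Int.add_one_le_iff.mpr hXP
      have hm0 : (0:ℤ) ≤ (X - Y ^ c - 1) * (X + Y ^ c + 1) :=
        mul_nonneg (by linarith) (by linarith)
      have hsq : (Y ^ c) ^ 2 + 2 * Y ^ c + 1 ≤ X ^ 2 := by nlinarith only [hm0]
      rcases hε₁ with h1 | h1 <;> rcases hε₂ with h2 | h2 <;>
        rw [h1, h2] at heq2 <;> linarith only [hsq, heq2, hYbP, hYb3, hP3]
  -- Define d, e
  set d : ℕ := b - c with hdd
  set e : ℕ := a - b with hee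
  have hd1 : 1 ≤ d := by omega
  have he1 : 1 ≤ e := by omega
  have hcde : c = d + e := by omega
  have hbcd : b = c + d := by omega
  set Q := Y ^ d with hQ
  set R := Y ^ e with hR
  set P := Y ^ c with hP
  have hPQR : P = Q * R := by rw [hP, hQ, hR, hcde, pow_add]
  have hYbQ : Y ^ b = P * Q := by rw [hP, hQ, hbcd, pow_add]
  have hQ3 : 3 ≤ Q := hYpow3 d hd1
  have hR3 : 3 ≤ R := hYpow3 e he1
  have hP3 : 3 ≤ P := hYpow3 c hc1
  have heq2 : X ^ 2 = P ^ 2 + ε₁ * (P * Q) + ε₂ := by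
    rw [← hYbQ]
    rw [hYa] at heq
    exact heq
  -- u, v, k, m
  set l : ℤ := 4 * R + 2 * ε₁ with hldef
  have hl10 : 10 ≤ l := by
    rcases hε₁ with h | h <;> rw [hldef, h] <;> linarith
  set u : ℤ := 2 * P + ε₁ * Q with hu
  set v : ℤ := 2 * X with hv
  have hQP : 3 * Q ≤ P := by
    have hm0 : (0:ℤ) ≤ (R - 3) * Q := mul_nonneg (by linarith) (by linarith)
    have h1 : 3 * Q ≤ Q * R := by nlinarith only [hm0]
    rw [hPQR]; linarith
  have hupos : 5 * Q ≤ u := by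
    rcases hε₁ with h | h <;> rw [hu, h] <;> linarith only [hQP, hQ3]
  have hvpos : 2 ≤ v := by rw [hv]; linarith
  have hid : u ^ 2 - v ^ 2 = Q ^ 2 - 4 * ε₂ := by
    rw [hu, hv]
    linear_combination (-4 : ℤ) * heq2 + Q ^ 2 * hε₁sq
  have hQsq : 9 ≤ Q ^ 2 := by nlinarith only [hQ3, sq_nonneg (Q - 3)]
  have hε₂4 : -4 ≤ 4 * ε₂ ∧ 4 * ε₂ ≤ 4 := by
    rcases hε₂ with h | h <;> rw [h] <;> norm_num
  have hvu : v < u := by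
    by_contra hcon
    push_neg at hcon
    have hu0 : (0:ℤ) ≤ u := by linarith
    have hsq : u * u ≤ v * v := mul_self_le_mul_self hu0 hcon
    have hsq' : u ^ 2 ≤ v ^ 2 := by nlinarith only [hsq]
    linarith only [hid, hQsq, hε₂4.2, hsq']
  set k : ℤ := u - v with hk
  set m : ℤ := u + v with hm
  have hk1 : 1 ≤ k := by
    have := Int.add_one_le_iff.mpr hvu
    rw [hk]; linarith
  have hsum : k + m = l * Q := by
    rw [hk, hm, hu, hldef, hPQR]; ring
  have hprod : k * m = Q ^ 2 - 4 * ε₂ := by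
    rw [hk, hm]
    linear_combination hid
  have hmQ : 5 * Q + 2 ≤ m := by rw [hm]; linarith
  have hkQ : k < Q := by
    by_contra hcon
    push_neg at hcon
    have h1 : Q * m ≤ k * m := mul_le_mul_of_nonneg_right hcon (by linarith)
    have h2' : Q * (5 * Q + 2) ≤ Q * m := mul_le_mul_of_nonneg_left hmQ (by linarith)
    nlinarith only [hprod, h1, h2', hε₂4.1, hQsq]
  -- Markov equation
  have hM : Q ^ 2 + k ^ 2 - l * Q * k = 4 * ε₂ := by
    linear_combination k * hsum - hprod
  -- Move to ℕ
  set K : ℕ := k.toNat with hK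
  have hKk : (K : ℤ) = k := Int.toNat_of_nonneg (by linarith)
  set L : ℕ := l.toNat with hL
  have hLl : (L : ℤ) = l := Int.toNat_of_nonneg (by linarith)
  have hL10 : 10 ≤ L := by omega
  have hqd : ((y ^ d : ℕ) : ℤ) = Q := by
    rw [hQ, hY]; push_cast; ring
  have hqd1 : 1 ≤ y ^ d := Nat.one_le_pow _ _ (by omega)
  have hKlt : K < y ^ d := by
    have h := hkQ
    rw [← hKk, ← hqd] at h
    exact_mod_cast h
  rcases hε₂ with h2 | h2
  · -- ε₂ = 1
    have hMnat : (y ^ d) ^ 2 + K ^ 2 = L * (y ^ d) * K + 4 := by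
      have hM' := hM
      rw [h2] at hM'
      have hZ : ((y ^ d : ℕ) : ℤ) ^ 2 + (K : ℤ) ^ 2 = (L : ℤ) * ((y ^ d : ℕ) : ℤ) * (K : ℤ) + 4 := by
        rw [hqd, hKk, hLl]
        linarith only [hM']
      exact_mod_cast hZ
    obtain ⟨N, hN1, hAz, hBz⟩ := markov_pos L hL10 (y ^ d) K hKlt hMnat
    rw [hLl] at hAz hBz
    rw [hqd] at hAz
    rw [hKk] at hBz
    have hN2 : 2 ≤ N := by
      by_contra hcon
      push_neg at hcon
      have hN1' : N = 1 := by omega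
      rw [hN1'] at hBz
      simp [zseq_zero] at hBz
      linarith only [hBz, hk1]
    rcases eq_or_lt_of_le hN2 with hN2' | hN3
    · -- N = 2 : Q = 2l, so y ∣ 4, y = 4
      rw [← hN2', zseq_two] at hAz
      have hdvd1 : Y ∣ Q := by rw [hQ]; exact dvd_pow_self Y (by omega)
      have hdvd2 : Y ∣ R := by rw [hR]; exact dvd_pow_self Y (by omega)
      have hdvd4 : Y ∣ 4 * ε₁ := by
        have h4 : (4:ℤ) * ε₁ = Q - 8 * R := by rw [hAz, hldef]; ring
        rw [h4]
        exact dvd_sub hdvd1 (Dvd.dvd.mul_left hdvd2 8)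
      have hdvd4' : Y ∣ 4 := by
        rcases hε₁ with h | h
        · rwa [h, mul_one] at hdvd4
        · rw [h] at hdvd4
          have := hdvd4.neg_right
          simpa using this
      have hy4 : y ∣ 4 := by
        rw [hY] at hdvd4'
        exact_mod_cast hdvd4'
      have hy4' : y ≤ 4 := Nat.le_of_dvd (by norm_num) hy4
      have hyval : y = 4 := by
        rcases (show y = 3 ∨ y = 4 by omega) with h | h
        · exfalso; rw [h] at hy4; norm_num at hy4
        · exact h
      exact hpow ⟨2, 2, by norm_num, by norm_num, by omega⟩
    · -- N ≥ 3
      have hgrow := zseq_grow l hl10 (N - 1)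
      have hidx : N - 1 + 1 = N := by omega
      rw [hidx] at hgrow
      have hl3R : 3 * R ≤ l - 1 := by
        rcases hε₁ with h | h <;> rw [hldef, h] <;> linarith
      have h3R : (3 * R) ^ (N - 1) ≤ (l - 1) ^ (N - 1) :=
        pow_le_pow_left₀ (by linarith) hl3R _
      have hRY : Y ≤ R := by
        rw [hR]
        calc Y = Y ^ 1 := (pow_one Y).symm
        _ ≤ Y ^ e := pow_le_pow_right₀ hY1 he1
      have hRpow : Y ^ (N - 1) ≤ R ^ (N - 1) := pow_le_pow_left₀ (by linarith) hRY _
      have h3pow : (1:ℤ) ≤ 3 ^ (N - 1) := one_le_pow₀ (by norm_num)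
      have hYN1 : (1:ℤ) ≤ Y ^ (N - 1) := one_le_pow₀ hY1
      have hmix : 3 ^ (N-1) * Y ^ (N-1) ≤ 3 ^ (N-1) * R ^ (N-1) :=
        mul_le_mul_of_nonneg_left hRpow (by linarith)
      have hQbig : 2 * (3 ^ (N-1) * Y ^ (N - 1)) ≤ Q := by
        calc 2 * (3 ^ (N-1) * Y ^ (N - 1)) ≤ 2 * (3 ^ (N-1) * R ^ (N - 1)) := by linarith only [hmix]
        _ = 2 * (3 * R) ^ (N - 1) := by rw [mul_pow]
        _ ≤ 2 * (l - 1) ^ (N - 1) := by linarith only [h3R]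
        _ ≤ 2 * zseq l N := by linarith only [hgrow.2.2]
        _ = Q := hAz.symm
      have hdN : N ≤ d := by
        by_contra hcon
        push_neg at hcon
        have hdN1 : d ≤ N - 1 := by omega
        have hQle : Q ≤ Y ^ (N - 1) := by
          rw [hQ]
          exact pow_le_pow_right₀ hY1 hdN1
        have hmix2 : 1 * Y ^ (N-1) ≤ 3 ^ (N-1) * Y ^ (N-1) :=
          mul_le_mul_of_nonneg_right h3pow (by linarith only [hYN1])
        linarith only [hQbig, hQle, hmix2, hYN1]
      -- 2-adic valuation
      have hleven : Even l := by rw [hldef]; exact ⟨2 * R + ε₁, by ring⟩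
      have hl2 : (4:ℤ) ∣ l - 2 := by
        rcases hε₁ with h | h
        · exact ⟨R, by rw [hldef, h]; ring⟩
        · exact ⟨R - 1, by rw [hldef, h]; ring⟩
      obtain ⟨t, q, hq_odd, hNtq⟩ := Nat.exists_eq_two_pow_mul_odd (show N ≠ 0 by omega)
      obtain ⟨w, hw_odd, hzw⟩ := zseq_two_adic l hleven hl2 t q hq_odd
      rw [← hNtq] at hzw
      have hzN1 : 1 ≤ zseq l N := zseq_pos l hl10 (by omega)
      have h2t : (0:ℤ) < 2 ^ t := pow_pos (by norm_num) t
      have hwpos : 1 ≤ w := by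
        by_contra hcon
        push_neg at hcon
        have hw0 : w ≤ 0 := by linarith
        have : (2:ℤ) ^ t * w ≤ 0 := mul_nonpos_of_nonneg_of_nonpos (by linarith) hw0
        rw [← hzw] at this
        linarith only [this, hzN1]
      set W : ℕ := w.toNat with hW
      have hWw : (W : ℤ) = w := Int.toNat_of_nonneg (by linarith)
      have hWodd : Odd W := by
        rw [Nat.odd_iff]
        rw [Int.odd_iff] at hw_odd
        omega
      have hyd2 : y ^ d = 2 ^ (t + 1) * W := by
        have hZ : ((y ^ d : ℕ) : ℤ) = ((2 ^ (t + 1) * W : ℕ) : ℤ) := by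
          rw [hqd]
          push_cast
          rw [hWw, hAz, hzw]
          ring
        exact_mod_cast hZ
      obtain ⟨γ, r, hr_odd, hydef⟩ := Nat.exists_eq_two_pow_mul_odd (show y ≠ 0 by omega)
      have hyd3 : y ^ d = 2 ^ (γ * d) * r ^ d := by
        rw [hydef, mul_pow, ← pow_mul]
      have hrd_odd : Odd (r ^ d) := hr_odd.pow
      have hval : γ * d = t + 1 :=
        two_adic_unique (γ * d) (t + 1) (r ^ d) W hrd_odd hWodd (by rw [← hyd3, hyd2])
      have hγ1 : 1 ≤ γ := by
        by_contra hcon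
        push_neg at hcon
        have hγ0 : γ = 0 := by omega
        rw [hγ0, zero_mul] at hval
        omega
      have hdle : d ≤ γ * d := Nat.le_mul_of_pos_left d (by omega)
      have htd : d - 1 ≤ t := by omega
      have hq1 : 1 ≤ q := hq_odd.pos
      have hNbig : 2 ^ (d - 1) ≤ N := by
        calc 2 ^ (d - 1) ≤ 2 ^ t := Nat.pow_le_pow_right (by norm_num) htd
        _ ≤ 2 ^ t * q := Nat.le_mul_of_pos_right _ (by omega)
        _ = N := hNtq.symm
      have hd3 : 3 ≤ d := by omega
      have hcontra := lt_two_pow_pred d hd3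
      have : N < N := lt_of_le_of_lt hdN (lt_of_lt_of_le hcontra hNbig)
      exact absurd this (lt_irrefl N)
  · -- ε₂ = -1
    have hK1 : 1 ≤ K := by omega
    have hMnat : (y ^ d) ^ 2 + K ^ 2 + 4 = L * (y ^ d) * K := by
      have hM' := hM
      rw [h2] at hM'
      have hZ : ((y ^ d : ℕ) : ℤ) ^ 2 + (K : ℤ) ^ 2 + 4 = (L : ℤ) * ((y ^ d : ℕ) : ℤ) * (K : ℤ) := by
        rw [hqd, hKk, hLl]
        linarith only [hM']
      exact_mod_cast hZ
    exact markov_neg L hL10 (y ^ d) K hqd1 hK1 hMnat
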